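/- For α ∈ (0,1), the function p_α(x) = sin(πα)/(πα(x² + 2cos(πα)x + 1)) is a probability density on (0,∞): it is positive and ∫₀^∞ p_α(x) dx = 1. -/

import Mathlib

open Real MeasureTheory

theorem stmt_13 (α : ℝ) (hα : α ∈ Set.Ioo (0:ℝ) 1) :
    (∀ x : ℝ, 0 < x →
      0 < Real.sin (π * α) / (π * α * (x ^ 2 + 2 * Real.cos (π * α) * x + 1))) ∧
    ∫ x in Set.Ioi (0:ℝ),
        Real.sin (π * α) / (π * α * (x ^ 2 + 2 * Real.cos (π * α) * x + 1)) = 1 := by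
  obtain ⟨hα0, hα1⟩ := hα
  set θ := π * α with hθ
  have hθ0 : 0 < θ := by positivity
  have hθπ : θ < π := by
    calc θ = π * α := rfl
    _ < π * 1 := by nlinarith [pi_pos]
    _ = π := by ring
  set c := Real.cos θ with hc
  set s := Real.sin θ with hs
  have hs0 : 0 < s := Real.sin_pos_of_pos_of_lt_pi hθ0 hθπ
  have hcs : c ^ 2 + s ^ 2 = 1 := by
    rw [hc, hs]; exact Real.cos_sq_add_sin_sq θ
  have hden : ∀ x : ℝ, 0 ≤ x → 0 < x ^ 2 + 2 * c * x + 1 := by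
    intro x hx
    have : x ^ 2 + 2 * c * x + 1 = (x + c) ^ 2 + s ^ 2 := by nlinarith
    rw [this]; positivity
  constructor
  · intro x hx
    exact div_pos hs0 (mul_pos hθ0 (hden x hx.le))
  · -- antiderivative g x = s⁻¹ * arctan ((x + c) / s)
    set g : ℝ → ℝ := fun x => s⁻¹ * Real.arctan ((x + c) / s) with hg
    have hderiv : ∀ x ∈ Set.Ici (0:ℝ), HasDerivAt g ((x ^ 2 + 2 * c * x + 1)⁻¹) x := by
      intro x _
      have h1 : HasDerivAt (fun x : ℝ => (x + c) / s) (1 / s) x := by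
        simpa using ((hasDerivAt_id x).add_const c).div_const s
      have h2 := (Real.hasDerivAt_arctan ((x + c) / s)).comp x h1
      have h3 := h2.const_mul s⁻¹
      refine h3.congr_deriv ?_
      have hne : x ^ 2 + 2 * c * x + 1 ≠ 0 := by
        have : x ^ 2 + 2 * c * x + 1 = (x + c) ^ 2 + s ^ 2 := by nlinarith
        rw [this]; positivity
      have e : x ^ 2 + 2 * c * x + 1 = s ^ 2 + (x + c) ^ 2 := by nlinarith
      rw [e]
      field_simp
    have hpos : ∀ x ∈ Set.Ioi (0:ℝ), 0 ≤ (x ^ 2 + 2 * c * x + 1)⁻¹ := fun x hx =>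
      (inv_pos.mpr (hden x (le_of_lt hx))).le
    have htend : Filter.Tendsto g Filter.atTop (nhds (s⁻¹ * (π / 2))) := by
      apply Filter.Tendsto.const_mul
      apply (Real.tendsto_arctan_atTop.mono_right nhdsWithin_le_nhds).comp
      apply Filter.tendsto_atTop_add_const_right _ c Filter.tendsto_id |>.atTop_div_const hs0
    have key := integral_Ioi_of_hasDerivAt_of_nonneg' hderiv hpos htend
    have harct : Real.arctan (c / s) = π / 2 - θ := by
      have h1 : Real.tan (π / 2 - θ) = c / s := by
        rw [Real.tan_eq_sin_div_cos, Real.sin_pi_div_two_sub, Real.cos_pi_div_two_sub]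
      rw [← h1, Real.arctan_tan (by linarith) (by linarith [Real.pi_pos])]
    have hg0 : g 0 = s⁻¹ * (π / 2 - θ) := by
      simp only [hg, zero_add, harct]
    have hval : ∫ x in Set.Ioi (0:ℝ), (x ^ 2 + 2 * c * x + 1)⁻¹ = θ / s := by
      rw [key, hg0]; field_simp; ring
    have hrw : ∀ x : ℝ, Real.sin (π * α) / (π * α * (x ^ 2 + 2 * Real.cos (π * α) * x + 1))
        = (s / θ) * (x ^ 2 + 2 * c * x + 1)⁻¹ := by
      intro x
      rw [← hθ, ← hc, ← hs, div_eq_mul_inv, mul_inv, div_eq_mul_inv]; ring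
    have hrw' : ∀ x : ℝ, s / (θ * (x ^ 2 + 2 * c * x + 1)) = (s / θ) * (x ^ 2 + 2 * c * x + 1)⁻¹ := hrw
    simp only [hrw']
    rw [MeasureTheory.integral_const_mul, hval]
    field_simp
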